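/- Let f_1,…,f_k : ℝⁿ → ℝ each be differentiable at x ∈ ℝⁿ. If x is Pareto optimal, then 0 ∈ conv{∇f_1(x),…,∇f_k(x)}, the convex hull of the gradients of the objective functions at x. -/

import Mathlib

open Filter Topology RealInnerProductSpace

/-- If a real function has negative derivative at `0`, it is eventually smaller than its
value at `0` on the right. -/
lemma aux_eventually_lt {g : ℝ → ℝ} {g' : ℝ} (h : HasDerivAt g g' 0) (hg' : g' < 0) :
    ∀ᶠ t in 𝓝[>] (0 : ℝ), g t < g 0 := by
  have hslope : Filter.Tendsto (slope g 0) (𝓝[≠] (0:ℝ)) (𝓝 g') :=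
    (hasDerivAt_iff_tendsto_slope).1 h
  have h1 : ∀ᶠ t in 𝓝[≠] (0:ℝ), slope g 0 t < 0 :=
    hslope.eventually (eventually_lt_nhds hg')
  have h2 : 𝓝[>] (0:ℝ) ≤ 𝓝[≠] (0:ℝ) :=
    nhdsWithin_mono _ (fun t ht => ne_of_gt ht)
  filter_upwards [h2 h1, self_mem_nhdsWithin] with t ht htpos
  rw [Set.mem_Ioi] at htpos
  have : (g t - g 0) / t < 0 := by simpa [slope_def_field, div_eq_inv_mul] using ht
  have := (div_neg_iff.1 this)
  rcases this with ⟨h3, h4⟩ | ⟨h3, h4⟩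
  · linarith [htpos]
  · linarith

/-- if `x` is Pareto optimal for differentiable objectives `f_1,…,f_k`,
then `0` lies in the convex hull of the gradients at `x`. -/
theorem pareto_optimal_zero_mem_convexHull_gradients {n k : ℕ} (hk : 0 < k)
    (f : Fin k → EuclideanSpace ℝ (Fin n) → ℝ) (x : EuclideanSpace ℝ (Fin n))
    (hdiff : ∀ i, DifferentiableAt ℝ (f i) x)
    (hpareto : ¬ ∃ y : EuclideanSpace ℝ (Fin n),
      (∀ i, f i y ≤ f i x) ∧ (∃ j, f j y < f j x)) :
    (0 : EuclideanSpace ℝ (Fin n)) ∈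
      convexHull ℝ (Set.range fun i => gradient (f i) x) := by
  by_contra h0

  set S : Set (EuclideanSpace ℝ (Fin n)) := Set.range fun i => gradient (f i) x with hS
  have hSfin : S.Finite := Set.finite_range _
  have hconv : Convex ℝ (convexHull ℝ S) := convex_convexHull ℝ S
  have hclosed : IsClosed (convexHull ℝ S) :=
    (hSfin.isCompact_convexHull (𝕜 := ℝ)).isClosed
  obtain ⟨F, u, hFu, hu0⟩ := geometric_hahn_banach_closed_point hconv hclosed h0
  have hF0 : F 0 = 0 := map_zero F
  -- F (grad i) < 0 for all i
  have hFneg : ∀ i, F (gradient (f i) x) < 0 := fun i => by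
    have : gradient (f i) x ∈ convexHull ℝ S :=
      subset_convexHull ℝ S ⟨i, rfl⟩
    have := hFu _ this
    linarith [hu0, hF0.symm ▸ hu0]
  -- direction vector
  set v : EuclideanSpace ℝ (Fin n) := (InnerProductSpace.toDual ℝ (EuclideanSpace ℝ (Fin n))).symm F with hv
  have hvinner : ∀ a : EuclideanSpace ℝ (Fin n), ⟪v, a⟫ = F a := fun a => by
    rw [hv]
    exact InnerProductSpace.toDual_symm_apply (y := F) (x := a)
  -- derivative of f i along v at x is negative
  have hderiv : ∀ i, HasDerivAt (fun t : ℝ => f i (x + t • v)) (fderiv ℝ (f i) x v) 0 := by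
    intro i
    have hc : HasDerivAt (fun t : ℝ => x + t • v) v 0 := by
      simpa using ((hasDerivAt_id (0:ℝ)).smul_const v).const_add x
    have hF' : HasFDerivAt (f i) (fderiv ℝ (f i) x) (x + (0:ℝ) • v) := by
      simpa using (hdiff i).hasFDerivAt
    exact hF'.comp_hasDerivAt 0 hc
  have hneg : ∀ i, fderiv ℝ (f i) x v < 0 := by
    intro i
    have hgrad : ⟪gradient (f i) x, v⟫ = fderiv ℝ (f i) x v := by
      rw [show gradient (f i) x = (InnerProductSpace.toDual ℝ
        (EuclideanSpace ℝ (Fin n))).symm (fderiv ℝ (f i) x) from rfl]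
      exact InnerProductSpace.toDual_symm_apply (y := fderiv ℝ (f i) x) (x := v)
    rw [← hgrad, real_inner_comm, hvinner]
    exact hFneg i
  have hev : ∀ i, ∀ᶠ t in 𝓝[>] (0:ℝ), f i (x + t • v) < f i (x + (0:ℝ) • v) :=
    fun i => aux_eventually_lt (hderiv i) (hneg i)
  have hall : ∀ᶠ t in 𝓝[>] (0:ℝ), ∀ i, f i (x + t • v) < f i (x + (0:ℝ) • v) :=
    eventually_all.2 hev
  have hne : (𝓝[>] (0:ℝ)).NeBot := nhdsGT_neBot 0
  obtain ⟨t, ht⟩ := hall.exists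
  apply hpareto
  refine ⟨x + t • v, fun i => ?_, ⟨⟨0, hk⟩, ?_⟩⟩
  · have := ht i; simp at this; linarith [this]
  · have := ht ⟨0, hk⟩; simp at this; linarith [this]
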